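/- Let ϑ be a real number with sin(2ϑ) ≠ 0 (i.e., ϑ is not a multiple of π/2). Then there exists a positive real constant C(ϑ) such that for every positive integer n, the quantity t_n(ϑ) = ∑_{k=0}^{n} binomial(2k,k) binomial(2n−2k, n−k) · exp(4ikϑ) satisfies |t_n(ϑ)| ≤ C(ϑ) · 4^n / √n. -/

import Mathlib

open Finset

/-- `t_n(ϑ) = ∑_{k=0}^{n} C(2k,k) C(2n−2k, n−k) e^{4ikϑ}`. -/
noncomputable def tSeq (n : ℕ) (θ : ℝ) : ℂ :=
  ∑ k ∈ Finset.range (n + 1),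
    ((2 * k).choose k : ℂ) * ((2 * (n - k)).choose (n - k) : ℂ) *
      Complex.exp (4 * k * θ * Complex.I)

lemma cb_mono {i j : ℕ} (h : i ≤ j) :
    Nat.centralBinom (i + 1) * Nat.centralBinom j ≤
      Nat.centralBinom i * Nat.centralBinom (j + 1) := by
  have hi := Nat.succ_mul_centralBinom_succ i
  have hj := Nat.succ_mul_centralBinom_succ j
  refine Nat.le_of_mul_le_mul_left ?_ (show 0 < (i + 1) * (j + 1) by positivity)
  calc (i + 1) * (j + 1) * (Nat.centralBinom (i + 1) * Nat.centralBinom j)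
      = ((i + 1) * Nat.centralBinom (i + 1)) * ((j + 1) * Nat.centralBinom j) := by ring
    _ = (2 * (2 * i + 1) * Nat.centralBinom i) * ((j + 1) * Nat.centralBinom j) := by rw [hi]
    _ = (2 * ((2 * i + 1) * (j + 1))) * (Nat.centralBinom i * Nat.centralBinom j) := by ring
    _ ≤ (2 * ((i + 1) * (2 * j + 1))) * (Nat.centralBinom i * Nat.centralBinom j) := by
        apply Nat.mul_le_mul_right; apply Nat.mul_le_mul_left; nlinarith
    _ = (i + 1) * Nat.centralBinom i * ((j + 1) * Nat.centralBinom (j + 1)) := by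
        rw [hj]; ring
    _ = (i + 1) * (j + 1) * (Nat.centralBinom i * Nat.centralBinom (j + 1)) := by ring

lemma cb_sq (n : ℕ) : Nat.centralBinom n ^ 2 * (3 * n + 1) ≤ 16 ^ n := by
  induction n with
  | zero => simp [Nat.centralBinom]
  | succ s ih =>
    have hs := Nat.succ_mul_centralBinom_succ s
    refine Nat.le_of_mul_le_mul_left ?_ (show 0 < (s + 1) ^ 2 by positivity)
    calc (s + 1) ^ 2 * (Nat.centralBinom (s + 1) ^ 2 * (3 * (s + 1) + 1))
        = ((s + 1) * Nat.centralBinom (s + 1)) ^ 2 * (3 * s + 4) := by ring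
      _ = (2 * (2 * s + 1) * Nat.centralBinom s) ^ 2 * (3 * s + 4) := by rw [hs]
      _ = ((2 * s + 1) ^ 2 * (3 * s + 4)) * (4 * Nat.centralBinom s ^ 2) := by ring
      _ ≤ ((s + 1) ^ 2 * (4 * (3 * s + 1))) * (4 * Nat.centralBinom s ^ 2) := by
          apply Nat.mul_le_mul_right; nlinarith
      _ = (s + 1) ^ 2 * 16 * (Nat.centralBinom s ^ 2 * (3 * s + 1)) := by ring
      _ ≤ (s + 1) ^ 2 * 16 * 16 ^ s := Nat.mul_le_mul_left _ ih
      _ = (s + 1) ^ 2 * 16 ^ (s + 1) := by ring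

lemma cb_le (n : ℕ) (hn : 1 ≤ n) :
    (Nat.centralBinom n : ℝ) ≤ 4 ^ n / Real.sqrt n := by
  have hn' : (0 : ℝ) < n := by exact_mod_cast hn
  rw [le_div_iff₀ (Real.sqrt_pos.mpr hn')]
  have h1 : ((Nat.centralBinom n : ℝ) * Real.sqrt n) ^ 2 ≤ ((4 : ℝ) ^ n) ^ 2 := by
    have h2 : (Nat.centralBinom n : ℝ) ^ 2 * (3 * n + 1) ≤ 16 ^ n := by
      exact_mod_cast cb_sq n
    have h3 : (Nat.centralBinom n : ℝ) ^ 2 * n ≤ (Nat.centralBinom n : ℝ) ^ 2 * (3 * n + 1) := by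
      apply mul_le_mul_of_nonneg_left (by linarith) (by positivity)
    calc ((Nat.centralBinom n : ℝ) * Real.sqrt n) ^ 2
        = (Nat.centralBinom n : ℝ) ^ 2 * (Real.sqrt n) ^ 2 := by ring
      _ = (Nat.centralBinom n : ℝ) ^ 2 * n := by rw [Real.sq_sqrt hn'.le]
      _ ≤ 16 ^ n := h3.trans h2
      _ = ((4 : ℝ) ^ n) ^ 2 := by
          rw [← pow_mul, mul_comm n 2, pow_mul]; norm_num
  have := Real.sqrt_le_sqrt h1
  rwa [Real.sqrt_sq (by positivity), Real.sqrt_sq (by positivity)] at this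

theorem tSeq_upper_bound (θ : ℝ) (hθ : Real.sin (2 * θ) ≠ 0) :
    ∃ C : ℝ, 0 < C ∧ ∀ n : ℕ, 1 ≤ n →
      ‖tSeq n θ‖ ≤ C * 4 ^ n / Real.sqrt n := by
  set z : ℂ := Complex.exp (((4 * θ : ℝ) : ℂ) * Complex.I) with hzdef
  have hzabs : ‖z‖ = 1 := Complex.norm_exp_ofReal_mul_I _
  have hz1 : z ≠ 1 := by
    intro h
    rw [hzdef, Complex.exp_eq_one_iff] at h
    obtain ⟨m, hm⟩ := h
    apply hθ
    have h4 : ((4 * θ : ℝ) : ℂ) = ((m * (2 * Real.pi) : ℝ) : ℂ) := by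
      apply mul_right_cancel₀ Complex.I_ne_zero
      rw [hm]; push_cast; ring
    have h4' : (4 * θ : ℝ) = m * (2 * Real.pi) := by exact_mod_cast h4
    have h2θ : 2 * θ = (m : ℝ) * Real.pi := by linarith
    rw [h2θ]; exact Real.sin_int_mul_pi m
  have hd : 0 < ‖z - 1‖ := by
    rw [norm_pos_iff]; exact sub_ne_zero.mpr hz1
  refine ⟨6 / ‖z - 1‖, by positivity, ?_⟩
  intro n hn
  set c : ℕ → ℝ := fun k => (Nat.centralBinom k : ℝ) with hc
  have hcpos : ∀ k, 0 < c k := fun k => by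
    simp only [hc]; exact_mod_cast Nat.centralBinom_pos k
  set a : ℕ → ℝ := fun k => c k * c (n - k) with ha
  -- rewrite tSeq as ∑ a k • z^k
  have htseq : tSeq n θ = ∑ k ∈ range (n + 1), ((a k : ℝ) : ℂ) • z ^ k := by
    unfold tSeq
    refine Finset.sum_congr rfl fun k _ => ?_
    rw [smul_eq_mul]
    have hzk : z ^ k = Complex.exp (4 * k * θ * Complex.I) := by
      rw [hzdef, ← Complex.exp_nat_mul]
      congr 1; push_cast; ring
    rw [hzk, ha, hc]
    push_cast [Nat.centralBinom]
    ring
  -- geometric sums are bounded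
  have hG : ∀ m : ℕ, ‖∑ j ∈ range m, z ^ j‖ ≤ 2 / ‖z - 1‖ := by
    intro m
    rw [geom_sum_eq hz1, norm_div]
    gcongr
    calc ‖z ^ m - 1‖ ≤ ‖z ^ m‖ + ‖1‖ :=
          norm_sub_le _ _
      _ = 2 := by rw [norm_pow, hzabs]; norm_num
  -- Abel summation
  have habel := Finset.sum_range_by_parts (fun k => ((a k : ℝ) : ℂ)) (fun k => z ^ k) (n + 1)
  simp only [Nat.add_sub_cancel] at habel
  rw [htseq, habel]
  -- monotonicity
  set m : ℕ := (n + 1) / 2 with hm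
  have hmn : m ≤ n := by omega
  have hdec : ∀ i, i + 1 ≤ m → a (i + 1) ≤ a i := by
    intro i hi
    have h1 : 2 * i + 1 ≤ n := by omega
    have e1 : n - (i + 1) = n - i - 1 := by omega
    have e2 : n - i = (n - i - 1) + 1 := by omega
    have h' : c (i + 1) * c (n - i - 1) ≤ c i * c (n - i - 1 + 1) := by
      simp only [hc]; exact_mod_cast cb_mono (show i ≤ n - i - 1 by omega)
    rw [show n - i - 1 + 1 = n - i from by omega] at h'
    simp only [ha, e1]
    exact h'
  have hinc : ∀ i, m ≤ i → i < n → a i ≤ a (i + 1) := by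
    intro i hi hin
    have h1 : n ≤ 2 * i + 1 := by omega
    have e1 : n - (i + 1) = n - i - 1 := by omega
    have e2 : n - i = (n - i - 1) + 1 := by omega
    have h' : c (n - i - 1 + 1) * c i ≤ c (n - i - 1) * c (i + 1) := by
      simp only [hc]; exact_mod_cast cb_mono (show n - i - 1 ≤ i by omega)
    rw [show n - i - 1 + 1 = n - i from by omega] at h'
    simp only [ha, e1]
    rw [mul_comm (c i), mul_comm (c (i + 1))]
    exact h'
  -- total variation bound
  have hTV : ∑ i ∈ range n, |a (i + 1) - a i| ≤ 2 * c n := by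
    rw [← Finset.sum_range_add_sum_Ico _ hmn]
    have hL : ∑ i ∈ range m, |a (i + 1) - a i| = a 0 - a m := by
      rw [← Finset.sum_range_sub' a m]
      refine Finset.sum_congr rfl fun i hi => ?_
      rw [abs_of_nonpos (by linarith [hdec i (Finset.mem_range.mp hi)])]
      ring
    have hR : ∑ i ∈ Finset.Ico m n, |a (i + 1) - a i| = a n - a m := by
      have : ∑ i ∈ Finset.Ico m n, |a (i + 1) - a i|
          = ∑ j ∈ range (n - m), (a (m + j + 1) - a (m + j)) := by
        rw [Finset.sum_Ico_eq_sum_range]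
        refine Finset.sum_congr rfl fun j hj => ?_
        have hj' := Finset.mem_range.mp hj
        rw [abs_of_nonneg (by linarith [hinc (m + j) (by omega) (by omega)])]
      rw [this]
      have h2 : ∑ j ∈ range (n - m), (a (m + j + 1) - a (m + j))
          = (fun j => a (m + j)) (n - m) - (fun j => a (m + j)) 0 :=
        Finset.sum_range_sub (fun j => a (m + j)) (n - m)
      simp only at h2
      rw [h2, show m + (n - m) = n from by omega, Nat.add_zero]
    rw [hL, hR]
    have ha0 : a 0 = c n := by simp [ha, hc]
    have han : a n = c n := by simp [ha, hc, Nat.centralBinom]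
    have := (hcpos m).le
    have ham : 0 < a m := mul_pos (hcpos m) (hcpos (n - m))
    rw [ha0, han]; linarith
  -- combine
  have key : ‖((a n : ℝ) : ℂ) • ∑ j ∈ range (n + 1), z ^ j
      - ∑ i ∈ range n, (((a (i + 1) : ℝ) : ℂ) - ((a i : ℝ) : ℂ)) • ∑ j ∈ range (i + 1), z ^ j‖
      ≤ (2 / ‖z - 1‖) * (3 * c n) := by
    have h1 : ‖((a n : ℝ) : ℂ) • ∑ j ∈ range (n + 1), z ^ j‖
        ≤ a n * (2 / ‖z - 1‖) := by
      rw [smul_eq_mul, norm_mul, Complex.norm_real, Real.norm_eq_abs, abs_of_pos (mul_pos (hcpos n) (hcpos (n - n)))]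
      exact mul_le_mul_of_nonneg_left (hG _) (le_of_lt (mul_pos (hcpos n) (hcpos (n - n))))
    have h2 : ‖∑ i ∈ range n,
        (((a (i + 1) : ℝ) : ℂ) - ((a i : ℝ) : ℂ)) • ∑ j ∈ range (i + 1), z ^ j‖
        ≤ (∑ i ∈ range n, |a (i + 1) - a i|) * (2 / ‖z - 1‖) := by
      calc ‖∑ i ∈ range n,
            (((a (i + 1) : ℝ) : ℂ) - ((a i : ℝ) : ℂ)) • ∑ j ∈ range (i + 1), z ^ j‖
          ≤ ∑ i ∈ range n, ‖(((a (i + 1) : ℝ) : ℂ) - ((a i : ℝ) : ℂ)) • ∑ j ∈ range (i + 1), z ^ j‖ :=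
            norm_sum_le _ _
        _ ≤ ∑ i ∈ range n, |a (i + 1) - a i| * (2 / ‖z - 1‖) := by
            refine Finset.sum_le_sum fun i _ => ?_
            rw [smul_eq_mul, norm_mul]
            have : ‖((a (i + 1) : ℝ) : ℂ) - ((a i : ℝ) : ℂ)‖ = |a (i + 1) - a i| := by
              rw [← Complex.ofReal_sub, Complex.norm_real, Real.norm_eq_abs]
            rw [this]
            exact mul_le_mul_of_nonneg_left (hG _) (abs_nonneg _)
        _ = (∑ i ∈ range n, |a (i + 1) - a i|) * (2 / ‖z - 1‖) := by
            rw [← Finset.sum_mul]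
    have han : a n = c n := by simp [ha, hc, Nat.centralBinom]
    calc ‖_‖ ≤ _ + _ := norm_sub_le _ _
      _ ≤ a n * (2 / ‖z - 1‖)
          + (∑ i ∈ range n, |a (i + 1) - a i|) * (2 / ‖z - 1‖) := add_le_add h1 h2
      _ ≤ c n * (2 / ‖z - 1‖) + 2 * c n * (2 / ‖z - 1‖) := by
          rw [han]
          have : (0:ℝ) ≤ 2 / ‖z - 1‖ := by positivity
          nlinarith [hTV]
      _ = (2 / ‖z - 1‖) * (3 * c n) := by ring
  refine key.trans ?_
  have hcle := cb_le n hn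
  have hsq : 0 < Real.sqrt n := Real.sqrt_pos.mpr (by exact_mod_cast hn)
  calc 2 / ‖z - 1‖ * (3 * c n) = 6 / ‖z - 1‖ * c n := by ring
    _ ≤ 6 / ‖z - 1‖ * (4 ^ n / Real.sqrt n) := by
        exact mul_le_mul_of_nonneg_left hcle (by positivity)
    _ = 6 / ‖z - 1‖ * 4 ^ n / Real.sqrt n := by ring
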